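/- Let h₂ ∈ ℝ and let η : ℝ² → ℝ be continuous with sup η < h₂, and set Ω₂ = {(x,y,z) ∈ ℝ³ : η(x,y) < z < h₂}. Suppose P : Ω₂ → ℝ is real-analytic on Ω₂ and satisfies ∂ᵧP ≡ 0 in Ω₂. Then P is independent of y: P(x, y₁, z) = P(x, y₂, z) whenever both (x, y₁, z) and (x, y₂, z) belong to Ω₂. -/

import Mathlib

noncomputable section

/-- Partial derivative in the `x`-direction of a function on `ℝ × ℝ × ℝ`. -/
def pdx (f : ℝ × ℝ × ℝ → ℝ) (p : ℝ × ℝ × ℝ) : ℝ := fderiv ℝ f p (1, 0, 0)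

/-- Partial derivative in the `y`-direction of a function on `ℝ × ℝ × ℝ`. -/
def pdy (f : ℝ × ℝ × ℝ → ℝ) (p : ℝ × ℝ × ℝ) : ℝ := fderiv ℝ f p (0, 1, 0)

/-- Partial derivative in the `z`-direction of a function on `ℝ × ℝ × ℝ`. -/
def pdz (f : ℝ × ℝ × ℝ → ℝ) (p : ℝ × ℝ × ℝ) : ℝ := fderiv ℝ f p (0, 0, 1)

/-- **Propagation of `y`-independence by real analyticity.** Let `η : ℝ² → ℝ` be
continuous with `sup η < h₂` and let `Ω₂ = {(x,y,z) : η(x,y) < z < h₂}`. If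
`P : Ω₂ → ℝ` is real analytic with `∂ᵧP ≡ 0` in `Ω₂`, then `P` is independent of `y`:
`P(x, y₁, z) = P(x, y₂, z)` whenever both points lie in `Ω₂`. -/
theorem analytic_pressure_y_independent
    (h₂ : ℝ) (η : ℝ × ℝ → ℝ) (hη : Continuous η)
    (hsup : ∃ b : ℝ, b < h₂ ∧ ∀ q : ℝ × ℝ, η q ≤ b)
    (P : ℝ × ℝ × ℝ → ℝ)
    (hP : AnalyticOnNhd ℝ P {p : ℝ × ℝ × ℝ | η (p.1, p.2.1) < p.2.2 ∧ p.2.2 < h₂})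
    (hPy : ∀ p ∈ {p : ℝ × ℝ × ℝ | η (p.1, p.2.1) < p.2.2 ∧ p.2.2 < h₂}, pdy P p = 0) :
    ∀ x y₁ y₂ z : ℝ,
      (x, y₁, z) ∈ {p : ℝ × ℝ × ℝ | η (p.1, p.2.1) < p.2.2 ∧ p.2.2 < h₂} →
      (x, y₂, z) ∈ {p : ℝ × ℝ × ℝ | η (p.1, p.2.1) < p.2.2 ∧ p.2.2 < h₂} →
      P (x, y₁, z) = P (x, y₂, z) := by
  obtain ⟨b, hb, hηb⟩ := hsup
  intro x y₁ y₂ z h1 h2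
  set Ω : Set (ℝ × ℝ × ℝ) := {p : ℝ × ℝ × ℝ | η (p.1, p.2.1) < p.2.2 ∧ p.2.2 < h₂} with hΩ
  -- slab membership
  have hslab : ∀ y t : ℝ, b < t → t < h₂ → (x, y, t) ∈ Ω := by
    intro y t hbt hth₂
    exact ⟨lt_of_le_of_lt (hηb _) hbt, hth₂⟩
  -- P is constant in y on the slab
  have hconst : ∀ t : ℝ, b < t → t < h₂ → ∀ u v : ℝ, P (x, u, t) = P (x, v, t) := by
    intro t hbt hth₂ u v
    have hderiv : ∀ y : ℝ, HasDerivAt (fun y => P (x, y, t)) 0 y := by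
      intro y
      have hmem : (x, y, t) ∈ Ω := hslab y t hbt hth₂
      have hinner : HasDerivAt (fun y : ℝ => ((x : ℝ), y, (t : ℝ)))
          ((0 : ℝ), (1 : ℝ), (0 : ℝ)) y :=
        (hasDerivAt_const y x).prodMk ((hasDerivAt_id y).prodMk (hasDerivAt_const y t))
      have hPd : HasFDerivAt P (fderiv ℝ P (x, y, t)) (x, y, t) :=
        ((hP _ hmem).differentiableAt).hasFDerivAt
      have h0 : (fderiv ℝ P (x, y, t)) (0, 1, 0) = 0 := hPy _ hmem
      have := hPd.comp_hasDerivAt y hinner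
      simpa [Function.comp_def, h0] using this
    have hdiff : Differentiable ℝ (fun y => P (x, y, t)) :=
      fun y => (hderiv y).differentiableAt
    have hd0 : ∀ y : ℝ, deriv (fun y => P (x, y, t)) y = 0 :=
      fun y => (hderiv y).deriv
    exact is_const_of_deriv_eq_zero hdiff hd0 u v
  -- the vertical-line function
  set f : ℝ → ℝ := fun t => P (x, y₁, t) - P (x, y₂, t) with hf
  set U : Set ℝ := Set.Ioo (max (η (x, y₁)) (η (x, y₂))) h₂ with hU
  have hUopen : IsOpen U := isOpen_Ioo
  have hUconn : IsPreconnected U := (convex_Ioo _ _).isPreconnected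
  have hline : ∀ y : ℝ, AnalyticOnNhd ℝ (fun t : ℝ => P (x, y, t)) {t | η (x, y) < t ∧ t < h₂} := by
    intro y t ht
    have hmem : (x, y, t) ∈ Ω := ⟨ht.1, ht.2⟩
    have hin : AnalyticAt ℝ (fun t : ℝ => ((x : ℝ), y, t)) t :=
      analyticAt_const.prod (analyticAt_const.prod (analyticAt_id))
    exact AnalyticAt.comp (f := fun t : ℝ => ((x : ℝ), y, t)) (hP _ hmem) hin
  have hfan : AnalyticOnNhd ℝ f U := by
    intro t ht
    have h1' : AnalyticAt ℝ (fun t : ℝ => P (x, y₁, t)) t :=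
      hline y₁ t ⟨lt_of_le_of_lt (le_max_left _ _) ht.1, ht.2⟩
    have h2' : AnalyticAt ℝ (fun t : ℝ => P (x, y₂, t)) t :=
      hline y₂ t ⟨lt_of_le_of_lt (le_max_right _ _) ht.1, ht.2⟩
    exact h1'.sub h2'
  -- f vanishes on a neighborhood of t₀ = (b + h₂)/2
  set t₀ : ℝ := (b + h₂) / 2 with ht₀
  have hbt₀ : b < t₀ := by simp [ht₀]; linarith
  have ht₀h : t₀ < h₂ := by simp [ht₀]; linarith
  have ht₀U : t₀ ∈ U := by
    constructor
    · exact lt_of_le_of_lt (max_le (hηb _) (hηb _)) hbt₀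
    · exact ht₀h
  have hev : f =ᶠ[nhds t₀] 0 := by
    filter_upwards [Ioo_mem_nhds hbt₀ ht₀h] with t ht
    simp only [hf, Pi.zero_apply, sub_eq_zero]
    exact hconst t ht.1 ht.2 y₁ y₂
  have hzero : Set.EqOn f 0 U :=
    hfan.eqOn_zero_of_preconnected_of_eventuallyEq_zero hUconn ht₀U hev
  have hzU : z ∈ U := ⟨max_lt h1.1 h2.1, h1.2⟩
  have := hzero hzU
  simpa [hf, sub_eq_zero] using this
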